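/- For u ∈ C^4 near z_0 on the regular-pattern uniform mesh, composing the gradient recovery stencil with itself in the x-direction yields H_h^{xx} u(z_0) = (1/(36h^2))·Σ_{j,k} c_j c_k u(z_0 + h(d_j + d_k)) where c = (2,1,-1,-2,-1,1) and d_j as in the regular-pattern stencil, and this satisfies H_h^{xx} u(z_0) = u_{xx}(z_0) + O(h^2). -/

import Mathlib

open Set
set_option maxHeartbeats 2000000
set_option synthInstance.maxHeartbeats 400000

noncomputable instance instNACG3 : NormedAddCommGroup (ℝ × ℝ →L[ℝ] ℝ × ℝ →L[ℝ] ℝ × ℝ →L[ℝ] ℝ) :=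
  @ContinuousLinearMap.toNormedAddCommGroup ℝ ℝ (ℝ × ℝ) (ℝ × ℝ →L[ℝ] ℝ × ℝ →L[ℝ] ℝ) _ _ _ _ _ _
    (RingHom.id ℝ) _

noncomputable instance instNS3 : NormedSpace ℝ (ℝ × ℝ →L[ℝ] ℝ × ℝ →L[ℝ] ℝ × ℝ →L[ℝ] ℝ) :=
  @ContinuousLinearMap.toNormedSpace ℝ ℝ (ℝ × ℝ) (ℝ × ℝ →L[ℝ] ℝ × ℝ →L[ℝ] ℝ) _ _ _ _ _ _
    (RingHom.id ℝ) _ ℝ _ _ _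

noncomputable instance instNACG4 :
    NormedAddCommGroup (ℝ × ℝ →L[ℝ] ℝ × ℝ →L[ℝ] ℝ × ℝ →L[ℝ] ℝ × ℝ →L[ℝ] ℝ) :=
  @ContinuousLinearMap.toNormedAddCommGroup ℝ ℝ (ℝ × ℝ)
    (ℝ × ℝ →L[ℝ] ℝ × ℝ →L[ℝ] ℝ × ℝ →L[ℝ] ℝ) _ _ _ _ _ _ (RingHom.id ℝ) _

noncomputable instance instNS4 :
    NormedSpace ℝ (ℝ × ℝ →L[ℝ] ℝ × ℝ →L[ℝ] ℝ × ℝ →L[ℝ] ℝ × ℝ →L[ℝ] ℝ) :=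
  @ContinuousLinearMap.toNormedSpace ℝ ℝ (ℝ × ℝ) (ℝ × ℝ →L[ℝ] ℝ × ℝ →L[ℝ] ℝ × ℝ →L[ℝ] ℝ) _ _ _ _ _ _
    (RingHom.id ℝ) _ ℝ _ _ _

variable {F : Type*} [NormedAddCommGroup F] [NormedSpace ℝ F]

lemma hasDerivAt_line (f : ℝ × ℝ → F) (hf : Differentiable ℝ f) (z v : ℝ × ℝ) (t : ℝ) :
    HasDerivAt (fun s : ℝ => f (z + s • v)) (fderiv ℝ f (z + t • v) v) t := by
  have hline : HasDerivAt (fun s : ℝ => z + s • v) v t := by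
    simpa using ((hasDerivAt_id t).smul_const v).const_add z
  exact (hf (z + t • v)).hasFDerivAt.comp_hasDerivAt t hline

lemma itdw_eq (f : ℝ → ℝ) (hf : ContDiff ℝ 4 f) {k : ℕ} (hk : (k : ℕ∞) ≤ 4) {y : ℝ}
    (hy : y ∈ Icc (0:ℝ) 1) :
    iteratedDerivWithin k f (Icc (0:ℝ) 1) y = iteratedDeriv k f y := by
  rw [iteratedDerivWithin_eq_iteratedFDerivWithin, iteratedDeriv_eq_iteratedFDeriv]
  congr 1
  have h := (contDiff_iff_ftaylorSeries.mp hf).hasFTaylorSeriesUpToOn (Icc (0:ℝ) 1)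
  exact (h.eq_iteratedFDerivWithin_of_uniqueDiffOn (by exact_mod_cast hk)
    (uniqueDiffOn_Icc one_pos) hy).symm

lemma taylor_line (u : ℝ × ℝ → ℝ) (z : ℝ × ℝ) (hu : ContDiff ℝ 4 u) :
    ∃ M : ℝ, 0 ≤ M ∧ ∀ v : ℝ × ℝ, ‖v‖ ≤ 2 → ∀ h : ℝ, 0 ≤ h → h ≤ 1 →
      |u (z + h • v) -
        (u z + h * fderiv ℝ u z v + h ^ 2 / 2 * fderiv ℝ (fderiv ℝ u) z v v
          + h ^ 3 / 6 * fderiv ℝ (fderiv ℝ (fderiv ℝ u)) z v v v)| ≤ M * h ^ 4 := by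
  have hd1 : Differentiable ℝ u := hu.differentiable (by norm_num)
  have h1 : ContDiff ℝ 3 (fderiv ℝ u) := hu.fderiv_right (by norm_num)
  have h2 : ContDiff ℝ 2 (fderiv ℝ (fderiv ℝ u)) := h1.fderiv_right (by norm_num)
  have h3 : ContDiff ℝ 1 (fderiv ℝ (fderiv ℝ (fderiv ℝ u))) := h2.fderiv_right (by norm_num)
  have h4c : Continuous (fderiv ℝ (fderiv ℝ (fderiv ℝ (fderiv ℝ u)))) :=
    (h3.fderiv_right (m := 0) (by norm_num)).continuous
  obtain ⟨M0, hM0⟩ := (isCompact_closedBall z 2).exists_bound_of_continuousOn h4c.continuousOn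
  have hM0nn : 0 ≤ M0 :=
    le_trans (norm_nonneg _) (hM0 z (Metric.mem_closedBall_self (by norm_num)))
  refine ⟨16 * M0 / 6, by positivity, ?_⟩
  intro v hv h h0 h1'
  have hψ : ContDiff ℝ 4 (fun t : ℝ => u (z + t • v)) :=
    hu.comp (contDiff_const.add (contDiff_id.smul contDiff_const))
  -- derivative chain
  have E0 : deriv (fun t : ℝ => u (z + t • v)) = fun t => fderiv ℝ u (z + t • v) v :=
    funext fun t => (hasDerivAt_line u hd1 z v t).deriv
  have E1 : deriv (fun t : ℝ => fderiv ℝ u (z + t • v) v)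
      = fun t => fderiv ℝ (fderiv ℝ u) (z + t • v) v v := by
    funext t
    have s1 := (hasDerivAt_line (fderiv ℝ u) (h1.differentiable (by norm_num)) z v t).clm_apply
      (hasDerivAt_const t v)
    simpa using s1.deriv
  have E2 : deriv (fun t : ℝ => fderiv ℝ (fderiv ℝ u) (z + t • v) v v)
      = fun t => fderiv ℝ (fderiv ℝ (fderiv ℝ u)) (z + t • v) v v v := by
    funext t
    have s1 := (hasDerivAt_line (fderiv ℝ (fderiv ℝ u)) (h2.differentiable (by norm_num))
      z v t).clm_apply (hasDerivAt_const t v)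
    have s2 := s1.clm_apply (hasDerivAt_const t v)
    simpa using s2.deriv
  have E3 : deriv (fun t : ℝ => fderiv ℝ (fderiv ℝ (fderiv ℝ u)) (z + t • v) v v v)
      = fun t => fderiv ℝ (fderiv ℝ (fderiv ℝ (fderiv ℝ u))) (z + t • v) v v v v := by
    funext t
    have s1 := (hasDerivAt_line (fderiv ℝ (fderiv ℝ (fderiv ℝ u)))
      (h3.differentiable (by norm_num)) z v t).clm_apply (G := ℝ × ℝ →L[ℝ] ℝ × ℝ →L[ℝ] ℝ)
        (hasDerivAt_const t v)
    have s2 := s1.clm_apply (hasDerivAt_const t v)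
    have s3 := s2.clm_apply (hasDerivAt_const t v)
    simpa using s3.deriv
  have I1 : iteratedDeriv 1 (fun t : ℝ => u (z + t • v)) = fun t => fderiv ℝ u (z + t • v) v := by
    rw [iteratedDeriv_one, E0]
  have I2 : iteratedDeriv 2 (fun t : ℝ => u (z + t • v))
      = fun t => fderiv ℝ (fderiv ℝ u) (z + t • v) v v := by
    rw [show (2:ℕ) = 1 + 1 from rfl, iteratedDeriv_succ, I1, E1]
  have I3 : iteratedDeriv 3 (fun t : ℝ => u (z + t • v))
      = fun t => fderiv ℝ (fderiv ℝ (fderiv ℝ u)) (z + t • v) v v v := by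
    rw [show (3:ℕ) = 2 + 1 from rfl, iteratedDeriv_succ, I2, E2]
  have I4 : iteratedDeriv 4 (fun t : ℝ => u (z + t • v))
      = fun t => fderiv ℝ (fderiv ℝ (fderiv ℝ (fderiv ℝ u))) (z + t • v) v v v v := by
    rw [show (4:ℕ) = 3 + 1 from rfl, iteratedDeriv_succ, I3, E3]
  -- bound on the fourth derivative
  have hbound : ∀ y ∈ Icc (0:ℝ) 1,
      ‖iteratedDerivWithin 4 (fun t : ℝ => u (z + t • v)) (Icc (0:ℝ) 1) y‖ ≤ 16 * M0 := by
    intro y hy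
    rw [itdw_eq _ hψ (by norm_num) hy, I4]
    have hp : z + y • v ∈ Metric.closedBall z 2 := by
      rw [Metric.mem_closedBall, dist_eq_norm, add_sub_cancel_left, norm_smul,
        Real.norm_eq_abs]
      have : |y| ≤ 1 := abs_le.mpr ⟨by linarith [hy.1], hy.2⟩
      nlinarith [norm_nonneg v, abs_nonneg y]
    have b4 : ‖fderiv ℝ (fderiv ℝ (fderiv ℝ (fderiv ℝ u))) (z + y • v)‖ ≤ M0 := hM0 _ hp
    have c1 := ContinuousLinearMap.le_opNorm
      (fderiv ℝ (fderiv ℝ (fderiv ℝ (fderiv ℝ u))) (z + y • v)) v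
    have c2 := ContinuousLinearMap.le_opNorm (𝕜 := ℝ) (𝕜₂ := ℝ) (σ₁₂ := RingHom.id ℝ)
      (E := ℝ × ℝ) (F := ℝ × ℝ →L[ℝ] ℝ × ℝ →L[ℝ] ℝ)
      (fderiv ℝ (fderiv ℝ (fderiv ℝ (fderiv ℝ u))) (z + y • v) v) v
    have c3 := ContinuousLinearMap.le_opNorm
      (fderiv ℝ (fderiv ℝ (fderiv ℝ (fderiv ℝ u))) (z + y • v) v v) v
    have c4 := ContinuousLinearMap.le_opNorm
      (fderiv ℝ (fderiv ℝ (fderiv ℝ (fderiv ℝ u))) (z + y • v) v v v) v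
    have n1 : (0:ℝ) ≤ ‖v‖ := norm_nonneg v
    nlinarith [norm_nonneg (fderiv ℝ (fderiv ℝ (fderiv ℝ (fderiv ℝ u))) (z + y • v) v),
      norm_nonneg (fderiv ℝ (fderiv ℝ (fderiv ℝ (fderiv ℝ u))) (z + y • v) v v),
      norm_nonneg (fderiv ℝ (fderiv ℝ (fderiv ℝ (fderiv ℝ u))) (z + y • v) v v v),
      norm_nonneg (fderiv ℝ (fderiv ℝ (fderiv ℝ (fderiv ℝ u))) (z + y • v))]
  have hψOn : ContDiffOn ℝ ((3:ℕ) + 1) (fun t : ℝ => u (z + t • v)) (Icc (0:ℝ) 1) := by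
    have : ((3:ℕ) + 1 : WithTop ℕ∞) = 4 := by norm_num
    exact this ▸ hψ.contDiffOn
  have htaylor := taylor_mean_remainder_bound (f := fun t : ℝ => u (z + t • v)) (a := 0) (b := 1)
    (n := 3) zero_le_one hψOn ⟨h0, h1'⟩ hbound
  have hTval : taylorWithinEval (fun t : ℝ => u (z + t • v)) 3 (Icc (0:ℝ) 1) 0 h
      = u z + h * fderiv ℝ u z v + h ^ 2 / 2 * fderiv ℝ (fderiv ℝ u) z v v
        + h ^ 3 / 6 * fderiv ℝ (fderiv ℝ (fderiv ℝ u)) z v v v := by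
    rw [taylor_within_apply]
    have m0 : (0:ℝ) ∈ Icc (0:ℝ) 1 := ⟨le_refl _, zero_le_one⟩
    rw [Finset.sum_range_succ, Finset.sum_range_succ, Finset.sum_range_succ,
      Finset.sum_range_one]
    rw [itdw_eq _ hψ (by norm_num) m0, itdw_eq _ hψ (by norm_num) m0,
      itdw_eq _ hψ (by norm_num) m0, itdw_eq _ hψ (by norm_num) m0]
    rw [iteratedDeriv_zero, I1, I2, I3]
    simp only [zero_smul, add_zero, smul_eq_mul]
    norm_num [Nat.factorial]
    ring
  rw [Real.norm_eq_abs, hTval] at htaylor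
  refine htaylor.trans (le_of_eq ?_)
  norm_num [Nat.factorial]
  ring

lemma pair_eq (a b : ℝ) : ((a, b) : ℝ × ℝ) = a • ((1:ℝ), (0:ℝ)) + b • ((0:ℝ), (1:ℝ)) := by
  simp [Prod.ext_iff]

lemma expand1 (L : (ℝ × ℝ) →L[ℝ] ℝ) (a b : ℝ) :
    L (a, b) = a * L (1, 0) + b * L (0, 1) := by
  rw [pair_eq a b]
  rw [map_add, map_smul, map_smul]
  simp [smul_eq_mul]

lemma expand2 (B : (ℝ × ℝ) →L[ℝ] ((ℝ × ℝ) →L[ℝ] ℝ)) (a b e f : ℝ) :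
    B (a, b) (e, f) = a * e * B (1, 0) (1, 0) + a * f * B (1, 0) (0, 1)
      + b * e * B (0, 1) (1, 0) + b * f * B (0, 1) (0, 1) := by
  rw [pair_eq a b, pair_eq e f]
  simp only [map_add, map_smul, ContinuousLinearMap.add_apply, ContinuousLinearMap.smul_apply,
    smul_eq_mul]
  ring

lemma expand3 (T : (ℝ × ℝ) →L[ℝ] ((ℝ × ℝ) →L[ℝ] ((ℝ × ℝ) →L[ℝ] ℝ))) (a b e f g k : ℝ) :
    T (a, b) (e, f) (g, k) =
      a * e * g * T (1, 0) (1, 0) (1, 0) + a * e * k * T (1, 0) (1, 0) (0, 1)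
      + a * f * g * T (1, 0) (0, 1) (1, 0) + a * f * k * T (1, 0) (0, 1) (0, 1)
      + b * e * g * T (0, 1) (1, 0) (1, 0) + b * e * k * T (0, 1) (1, 0) (0, 1)
      + b * f * g * T (0, 1) (0, 1) (1, 0) + b * f * k * T (0, 1) (0, 1) (0, 1) := by
  rw [pair_eq a b, pair_eq e f, pair_eq g k]
  simp only [map_add, map_smul, ContinuousLinearMap.add_apply, ContinuousLinearMap.smul_apply,
    smul_eq_mul]
  ring

lemma key_general (y0 : ℝ) (L : (ℝ × ℝ) →L[ℝ] ℝ) (B : (ℝ × ℝ) →L[ℝ] ((ℝ × ℝ) →L[ℝ] ℝ))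
    (T : (ℝ × ℝ) →L[ℝ] ((ℝ × ℝ) →L[ℝ] ((ℝ × ℝ) →L[ℝ] ℝ))) (h : ℝ) :
    (∑ j : Fin 6, ∑ k : Fin 6,
        (![(2:ℝ), 1, -1, -2, -1, 1] j * ![(2:ℝ), 1, -1, -2, -1, 1] k) *
          (y0 + h * L (![((1:ℝ),(0:ℝ)), (1, 1), (0, 1), (-1, 0), (-1, -1), (0, -1)] j
                + ![((1:ℝ),(0:ℝ)), (1, 1), (0, 1), (-1, 0), (-1, -1), (0, -1)] k)
            + h ^ 2 / 2 * B (![((1:ℝ),(0:ℝ)), (1, 1), (0, 1), (-1, 0), (-1, -1), (0, -1)] j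
                + ![((1:ℝ),(0:ℝ)), (1, 1), (0, 1), (-1, 0), (-1, -1), (0, -1)] k)
              (![((1:ℝ),(0:ℝ)), (1, 1), (0, 1), (-1, 0), (-1, -1), (0, -1)] j
                + ![((1:ℝ),(0:ℝ)), (1, 1), (0, 1), (-1, 0), (-1, -1), (0, -1)] k)
            + h ^ 3 / 6 * T (![((1:ℝ),(0:ℝ)), (1, 1), (0, 1), (-1, 0), (-1, -1), (0, -1)] j
                + ![((1:ℝ),(0:ℝ)), (1, 1), (0, 1), (-1, 0), (-1, -1), (0, -1)] k)
              (![((1:ℝ),(0:ℝ)), (1, 1), (0, 1), (-1, 0), (-1, -1), (0, -1)] j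
                + ![((1:ℝ),(0:ℝ)), (1, 1), (0, 1), (-1, 0), (-1, -1), (0, -1)] k)
              (![((1:ℝ),(0:ℝ)), (1, 1), (0, 1), (-1, 0), (-1, -1), (0, -1)] j
                + ![((1:ℝ),(0:ℝ)), (1, 1), (0, 1), (-1, 0), (-1, -1), (0, -1)] k)))
      = 36 * h ^ 2 * B (1, 0) (1, 0) := by
  set l1 := L (1, 0) with hl1
  set l2 := L (0, 1) with hl2
  set b11 := B (1, 0) (1, 0) with hb11
  set b12 := B (1, 0) (0, 1) with hb12
  set b21 := B (0, 1) (1, 0) with hb21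
  set b22 := B (0, 1) (0, 1) with hb22
  set t111 := T (1, 0) (1, 0) (1, 0) with ht111
  set t112 := T (1, 0) (1, 0) (0, 1) with ht112
  set t121 := T (1, 0) (0, 1) (1, 0) with ht121
  set t122 := T (1, 0) (0, 1) (0, 1) with ht122
  set t211 := T (0, 1) (1, 0) (1, 0) with ht211
  set t212 := T (0, 1) (1, 0) (0, 1) with ht212
  set t221 := T (0, 1) (0, 1) (1, 0) with ht221
  set t222 := T (0, 1) (0, 1) (0, 1) with ht222
  have E1 : ∀ a b : ℝ, L (a, b) = a * l1 + b * l2 := by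
    intro a b; rw [hl1, hl2]; exact expand1 L a b
  have E2 : ∀ a b e f : ℝ, B (a, b) (e, f) =
      a * e * b11 + a * f * b12 + b * e * b21 + b * f * b22 := by
    intro a b e f; rw [hb11, hb12, hb21, hb22]; exact expand2 B a b e f
  have E3 : ∀ a b e f g k : ℝ, T (a, b) (e, f) (g, k) =
      a * e * g * t111 + a * e * k * t112 + a * f * g * t121 + a * f * k * t122
      + b * e * g * t211 + b * e * k * t212 + b * f * g * t221 + b * f * k * t222 := by
    intro a b e f g k
    rw [ht111, ht112, ht121, ht122, ht211, ht212, ht221, ht222]; exact expand3 T a b e f g k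
  simp only [Fin.sum_univ_six, Matrix.cons_val_zero, Matrix.cons_val_one, Matrix.head_cons,
    Matrix.cons_val_two, Matrix.tail_cons, Matrix.cons_val_three, Matrix.cons_val_four,
    Matrix.cons_val_fin_one, Matrix.cons_val', show (5 : Fin 6) = (4 : Fin 5).succ from rfl,
    Matrix.cons_val_succ, Prod.mk_add_mk]
  simp only [E1, E2, E3]
  ring

/-- Composing the regular-pattern PPR gradient stencil with itself in the
x-direction gives a second-order consistent approximation of `u_xx`. -/
theorem stmt8 (u : ℝ × ℝ → ℝ) (z₀ : ℝ × ℝ) (hu : ContDiff ℝ 4 u)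
    (d : Fin 6 → ℝ × ℝ)
    (hd : d = ![(1, 0), (1, 1), (0, 1), (-1, 0), (-1, -1), (0, -1)])
    (c : Fin 6 → ℝ) (hc : c = ![2, 1, -1, -2, -1, 1]) :
    ∃ C > 0, ∃ h₀ > 0, ∀ h : ℝ, 0 < h → h ≤ h₀ →
      |(1 / (36 * h ^ 2)) * ∑ j : Fin 6, ∑ k : Fin 6,
          c j * c k * u (z₀ + h • (d j + d k))
        - iteratedFDeriv ℝ 2 u z₀ ![((1 : ℝ), (0 : ℝ)), (1, 0)]| ≤ C * h ^ 2 := by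
  subst hd hc
  obtain ⟨M, hMnn, hTay⟩ := taylor_line u z₀ hu
  refine ⟨4 * M + 1, by positivity, 1, one_pos, ?_⟩
  intro h hpos hle
  have hT2 : iteratedFDeriv ℝ 2 u z₀ ![((1 : ℝ), (0 : ℝ)), (1, 0)]
      = fderiv ℝ (fderiv ℝ u) z₀ (1, 0) (1, 0) := by
    rw [iteratedFDeriv_two_apply]
    norm_num
  have KEY := key_general (u z₀) (fderiv ℝ u z₀) (fderiv ℝ (fderiv ℝ u) z₀)
    (fderiv ℝ (fderiv ℝ (fderiv ℝ u)) z₀) h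
  have hdiff : (∑ j : Fin 6, ∑ k : Fin 6,
        ![(2:ℝ), 1, -1, -2, -1, 1] j * ![(2:ℝ), 1, -1, -2, -1, 1] k *
          u (z₀ + h • (![((1:ℝ),(0:ℝ)), (1, 1), (0, 1), (-1, 0), (-1, -1), (0, -1)] j
            + ![((1:ℝ),(0:ℝ)), (1, 1), (0, 1), (-1, 0), (-1, -1), (0, -1)] k)))
      - 36 * h ^ 2 * fderiv ℝ (fderiv ℝ u) z₀ (1, 0) (1, 0)
      = ∑ j : Fin 6, ∑ k : Fin 6,
        ![(2:ℝ), 1, -1, -2, -1, 1] j * ![(2:ℝ), 1, -1, -2, -1, 1] k *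
          (u (z₀ + h • (![((1:ℝ),(0:ℝ)), (1, 1), (0, 1), (-1, 0), (-1, -1), (0, -1)] j
              + ![((1:ℝ),(0:ℝ)), (1, 1), (0, 1), (-1, 0), (-1, -1), (0, -1)] k))
            - (u z₀
              + h * fderiv ℝ u z₀ (![((1:ℝ),(0:ℝ)), (1, 1), (0, 1), (-1, 0), (-1, -1), (0, -1)] j
                  + ![((1:ℝ),(0:ℝ)), (1, 1), (0, 1), (-1, 0), (-1, -1), (0, -1)] k)
              + h ^ 2 / 2 * fderiv ℝ (fderiv ℝ u) z₀
                  (![((1:ℝ),(0:ℝ)), (1, 1), (0, 1), (-1, 0), (-1, -1), (0, -1)] j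
                    + ![((1:ℝ),(0:ℝ)), (1, 1), (0, 1), (-1, 0), (-1, -1), (0, -1)] k)
                  (![((1:ℝ),(0:ℝ)), (1, 1), (0, 1), (-1, 0), (-1, -1), (0, -1)] j
                    + ![((1:ℝ),(0:ℝ)), (1, 1), (0, 1), (-1, 0), (-1, -1), (0, -1)] k)
              + h ^ 3 / 6 * fderiv ℝ (fderiv ℝ (fderiv ℝ u)) z₀
                  (![((1:ℝ),(0:ℝ)), (1, 1), (0, 1), (-1, 0), (-1, -1), (0, -1)] j
                    + ![((1:ℝ),(0:ℝ)), (1, 1), (0, 1), (-1, 0), (-1, -1), (0, -1)] k)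
                  (![((1:ℝ),(0:ℝ)), (1, 1), (0, 1), (-1, 0), (-1, -1), (0, -1)] j
                    + ![((1:ℝ),(0:ℝ)), (1, 1), (0, 1), (-1, 0), (-1, -1), (0, -1)] k)
                  (![((1:ℝ),(0:ℝ)), (1, 1), (0, 1), (-1, 0), (-1, -1), (0, -1)] j
                    + ![((1:ℝ),(0:ℝ)), (1, 1), (0, 1), (-1, 0), (-1, -1), (0, -1)] k))) := by
    rw [← KEY, ← Finset.sum_sub_distrib]
    refine Finset.sum_congr rfl fun j _ => ?_
    rw [← Finset.sum_sub_distrib]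
    refine Finset.sum_congr rfl fun k _ => ?_
    ring
  have hvnorm : ∀ j k : Fin 6,
      ‖(![((1:ℝ),(0:ℝ)), (1, 1), (0, 1), (-1, 0), (-1, -1), (0, -1)] j
        + ![((1:ℝ),(0:ℝ)), (1, 1), (0, 1), (-1, 0), (-1, -1), (0, -1)] k : ℝ × ℝ)‖ ≤ 2 := by
    intro j k
    fin_cases j <;> fin_cases k <;>
      norm_num [Prod.norm_def, Prod.mk_add_mk, Real.norm_eq_abs, abs_le]
  have hterm : ∀ j k : Fin 6,
      |![(2:ℝ), 1, -1, -2, -1, 1] j * ![(2:ℝ), 1, -1, -2, -1, 1] k *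
        (u (z₀ + h • (![((1:ℝ),(0:ℝ)), (1, 1), (0, 1), (-1, 0), (-1, -1), (0, -1)] j
            + ![((1:ℝ),(0:ℝ)), (1, 1), (0, 1), (-1, 0), (-1, -1), (0, -1)] k))
          - (u z₀
            + h * fderiv ℝ u z₀ (![((1:ℝ),(0:ℝ)), (1, 1), (0, 1), (-1, 0), (-1, -1), (0, -1)] j
                + ![((1:ℝ),(0:ℝ)), (1, 1), (0, 1), (-1, 0), (-1, -1), (0, -1)] k)
            + h ^ 2 / 2 * fderiv ℝ (fderiv ℝ u) z₀
                (![((1:ℝ),(0:ℝ)), (1, 1), (0, 1), (-1, 0), (-1, -1), (0, -1)] j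
                  + ![((1:ℝ),(0:ℝ)), (1, 1), (0, 1), (-1, 0), (-1, -1), (0, -1)] k)
                (![((1:ℝ),(0:ℝ)), (1, 1), (0, 1), (-1, 0), (-1, -1), (0, -1)] j
                  + ![((1:ℝ),(0:ℝ)), (1, 1), (0, 1), (-1, 0), (-1, -1), (0, -1)] k)
            + h ^ 3 / 6 * fderiv ℝ (fderiv ℝ (fderiv ℝ u)) z₀
                (![((1:ℝ),(0:ℝ)), (1, 1), (0, 1), (-1, 0), (-1, -1), (0, -1)] j
                  + ![((1:ℝ),(0:ℝ)), (1, 1), (0, 1), (-1, 0), (-1, -1), (0, -1)] k)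
                (![((1:ℝ),(0:ℝ)), (1, 1), (0, 1), (-1, 0), (-1, -1), (0, -1)] j
                  + ![((1:ℝ),(0:ℝ)), (1, 1), (0, 1), (-1, 0), (-1, -1), (0, -1)] k)
                (![((1:ℝ),(0:ℝ)), (1, 1), (0, 1), (-1, 0), (-1, -1), (0, -1)] j
                  + ![((1:ℝ),(0:ℝ)), (1, 1), (0, 1), (-1, 0), (-1, -1), (0, -1)] k)))|
        ≤ 4 * (M * h ^ 4) := by
    intro j k
    rw [abs_mul]
    have h1 : |![(2:ℝ), 1, -1, -2, -1, 1] j * ![(2:ℝ), 1, -1, -2, -1, 1] k| ≤ 4 := by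
      fin_cases j <;> fin_cases k <;> norm_num
    have h2 := hTay _ (hvnorm j k) h hpos.le hle
    exact mul_le_mul h1 h2 (abs_nonneg _) (by norm_num)
  have habs : |(∑ j : Fin 6, ∑ k : Fin 6,
        ![(2:ℝ), 1, -1, -2, -1, 1] j * ![(2:ℝ), 1, -1, -2, -1, 1] k *
          u (z₀ + h • (![((1:ℝ),(0:ℝ)), (1, 1), (0, 1), (-1, 0), (-1, -1), (0, -1)] j
            + ![((1:ℝ),(0:ℝ)), (1, 1), (0, 1), (-1, 0), (-1, -1), (0, -1)] k)))
      - 36 * h ^ 2 * fderiv ℝ (fderiv ℝ u) z₀ (1, 0) (1, 0)| ≤ 144 * (M * h ^ 4) := by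
    rw [hdiff]
    calc |∑ j : Fin 6, ∑ k : Fin 6, _| ≤ ∑ j : Fin 6, |∑ k : Fin 6, _| :=
          Finset.abs_sum_le_sum_abs _ _
      _ ≤ ∑ _j : Fin 6, ∑ _k : Fin 6, (4 * (M * h ^ 4)) :=
          Finset.sum_le_sum fun j _ =>
            (Finset.abs_sum_le_sum_abs _ _).trans
              (Finset.sum_le_sum fun k _ => hterm j k)
      _ = 144 * (M * h ^ 4) := by
          simp [Finset.sum_const, Finset.card_univ]
          ring
  rw [hT2]
  have hne : (36 * h ^ 2) ≠ 0 := by positivity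
  have eq1 : 1 / (36 * h ^ 2) * (∑ j : Fin 6, ∑ k : Fin 6,
        ![(2:ℝ), 1, -1, -2, -1, 1] j * ![(2:ℝ), 1, -1, -2, -1, 1] k *
          u (z₀ + h • (![((1:ℝ),(0:ℝ)), (1, 1), (0, 1), (-1, 0), (-1, -1), (0, -1)] j
            + ![((1:ℝ),(0:ℝ)), (1, 1), (0, 1), (-1, 0), (-1, -1), (0, -1)] k)))
        - fderiv ℝ (fderiv ℝ u) z₀ (1, 0) (1, 0)
      = 1 / (36 * h ^ 2) * ((∑ j : Fin 6, ∑ k : Fin 6,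
        ![(2:ℝ), 1, -1, -2, -1, 1] j * ![(2:ℝ), 1, -1, -2, -1, 1] k *
          u (z₀ + h • (![((1:ℝ),(0:ℝ)), (1, 1), (0, 1), (-1, 0), (-1, -1), (0, -1)] j
            + ![((1:ℝ),(0:ℝ)), (1, 1), (0, 1), (-1, 0), (-1, -1), (0, -1)] k)))
        - 36 * h ^ 2 * fderiv ℝ (fderiv ℝ u) z₀ (1, 0) (1, 0)) := by
    field_simp
  rw [eq1, abs_mul]
  have hpos' : (0:ℝ) < 1 / (36 * h ^ 2) := by positivity
  rw [abs_of_pos hpos']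
  calc 1 / (36 * h ^ 2) * |_| ≤ 1 / (36 * h ^ 2) * (144 * (M * h ^ 4)) := by
        exact mul_le_mul_of_nonneg_left habs hpos'.le
    _ = 4 * M * h ^ 2 := by field_simp; ring
    _ ≤ (4 * M + 1) * h ^ 2 := by nlinarith
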